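/- arXiv:2602.00797 — 3 statements merged into one kernel-verified Lean document; each statement's English description precedes it below -/
import Mathlib

section
/- Let X and X' be independent, identically distributed integrable random vectors in R^d. Then the conditional expectation E[X' - X | X + X' ] equals 0 almost surely. -/
open MeasureTheory ProbabilityTheory

/-- If `X, X'` are iid integrable random vectors in `ℝ^d`, then
`E[X' - X | X + X'] = 0` almost surely. -/
theorem zero_flow_midpoint {Ω : Type*} [MeasurableSpace Ω] (μ : Measure Ω)
    [IsProbabilityMeasure μ] {d : ℕ} (X X' : Ω → (Fin d → ℝ))
    (hX : Measurable X) (hX' : Measurable X')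
    (hXint : Integrable X μ) (hX'int : Integrable X' μ)
    (hindep : IndepFun X X' μ)
    (hident : μ.map X = μ.map X') :
    μ[(fun ω => X' ω - X ω) |
      MeasurableSpace.comap (fun ω => X ω + X' ω) inferInstance] =ᵐ[μ] 0 := by
  set S : Ω → (Fin d → ℝ) := fun ω => X ω + X' ω with hS
  have hSmeas : Measurable S := hX.add hX'
  have hm : MeasurableSpace.comap S inferInstance ≤ ‹MeasurableSpace Ω› := hSmeas.comap_le
  have hT : Measurable (fun ω => (X ω, X' ω)) := hX.prodMk hX'
  have hjoint : μ.map (fun ω => (X ω, X' ω)) = (μ.map X).prod (μ.map X) := by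
    rw [(indepFun_iff_map_prod_eq_prod_map_map hX.aemeasurable hX'.aemeasurable).mp hindep,
      ← hident]
  have hνprob : IsProbabilityMeasure (μ.map X) := Measure.isProbabilityMeasure_map hX.aemeasurable
  -- key set-integral equality
  have key : ∀ s : Set Ω, MeasurableSet[MeasurableSpace.comap S inferInstance] s →
      ∫ ω in s, X' ω ∂μ = ∫ ω in s, X ω ∂μ := by
    rintro s ⟨B, hB, rfl⟩
    have hBpre1 : MeasurableSet ((fun p : (Fin d → ℝ) × (Fin d → ℝ) => p.1 + p.2) ⁻¹' B) :=
      (measurable_fst.add measurable_snd) hB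
    have h1 : ∫ ω in S ⁻¹' B, X ω ∂μ
        = ∫ p in (fun p : (Fin d → ℝ) × (Fin d → ℝ) => p.1 + p.2) ⁻¹' B, p.1
            ∂((μ.map X).prod (μ.map X)) := by
      rw [← hjoint, setIntegral_map hBpre1
        measurable_fst.aestronglyMeasurable hT.aemeasurable]
      rfl
    have h2 : ∫ ω in S ⁻¹' B, X' ω ∂μ
        = ∫ p in (fun p : (Fin d → ℝ) × (Fin d → ℝ) => p.1 + p.2) ⁻¹' B, p.2
            ∂((μ.map X).prod (μ.map X)) := by
      rw [← hjoint, setIntegral_map hBpre1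
        measurable_snd.aestronglyMeasurable hT.aemeasurable]
      rfl
    have hswap : ∫ p in (fun p : (Fin d → ℝ) × (Fin d → ℝ) => p.1 + p.2) ⁻¹' B, p.2
            ∂((μ.map X).prod (μ.map X))
        = ∫ p in (fun p : (Fin d → ℝ) × (Fin d → ℝ) => p.1 + p.2) ⁻¹' B, p.1
            ∂((μ.map X).prod (μ.map X)) := by
      conv_lhs => rw [← Measure.prod_swap (μ := μ.map X) (ν := μ.map X)]
      rw [setIntegral_map hBpre1 measurable_snd.aestronglyMeasurable
        measurable_swap.aemeasurable]
      have hpre : Prod.swap ⁻¹' ((fun p : (Fin d → ℝ) × (Fin d → ℝ) => p.1 + p.2) ⁻¹' B)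
          = (fun p : (Fin d → ℝ) × (Fin d → ℝ) => p.1 + p.2) ⁻¹' B := by
        ext p; simp [Prod.swap, add_comm]
      rw [hpre]
      rfl
    rw [h1, h2, hswap]
  haveI : SigmaFinite (μ.trim hm) := by
    have := isFiniteMeasure_trim hm (μ := μ)
    exact IsFiniteMeasure.toSigmaFinite _
  have heq : μ[X'|MeasurableSpace.comap S inferInstance] =ᵐ[μ] μ[X|MeasurableSpace.comap S inferInstance] := by
    refine ae_eq_condExp_of_forall_setIntegral_eq hm hXint
      (fun s hs hμs => integrable_condExp.integrableOn)
      (fun s hs hμs => ?_)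
      (StronglyMeasurable.aestronglyMeasurable stronglyMeasurable_condExp)
    rw [setIntegral_condExp hm hX'int hs]
    exact key s hs
  calc μ[(fun ω => X' ω - X ω)|MeasurableSpace.comap S inferInstance]
      =ᵐ[μ] μ[X'|MeasurableSpace.comap S inferInstance] - μ[X|MeasurableSpace.comap S inferInstance] := condExp_sub hX'int hXint _
    _ =ᵐ[μ] 0 := by
        filter_upwards [heq] with ω hω
        simp [Pi.sub_apply, hω]
end

section
/- Let X0 and X1 be independent integrable real random variables. If E[(X1 - X0) h(X0 + X1)] = 0 for every bounded measurable function h: R -> C, then for every real t, E[X1 e^{it X1}] E[e^{it X0}] = E[X0 e^{it X0}] E[e^{it X1}]. -/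
open MeasureTheory ProbabilityTheory

private lemma indep_integral_mul_complex {Ω : Type*} [MeasurableSpace Ω]
    {μ : Measure Ω} [IsProbabilityMeasure μ] {X Y : Ω → ℂ}
    (hindep : IndepFun X Y μ) (hX : Integrable X μ) (hY : Integrable Y μ) :
    ∫ ω, X ω * Y ω ∂μ = (∫ ω, X ω ∂μ) * ∫ ω, Y ω ∂μ := by
  have hXre : Integrable (fun ω => (X ω).re) μ := hX.re
  have hXim : Integrable (fun ω => (X ω).im) μ := hX.im
  have hYre : Integrable (fun ω => (Y ω).re) μ := hY.re
  have hYim : Integrable (fun ω => (Y ω).im) μ := hY.im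
  have irr : IndepFun (fun ω => (X ω).re) (fun ω => (Y ω).re) μ :=
    hindep.comp Complex.measurable_re Complex.measurable_re
  have iri : IndepFun (fun ω => (X ω).re) (fun ω => (Y ω).im) μ :=
    hindep.comp Complex.measurable_re Complex.measurable_im
  have iir : IndepFun (fun ω => (X ω).im) (fun ω => (Y ω).re) μ :=
    hindep.comp Complex.measurable_im Complex.measurable_re
  have iii : IndepFun (fun ω => (X ω).im) (fun ω => (Y ω).im) μ :=
    hindep.comp Complex.measurable_im Complex.measurable_im
  have prr : Integrable (fun ω => (X ω).re * (Y ω).re) μ := irr.integrable_mul hXre hYre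
  have pri : Integrable (fun ω => (X ω).re * (Y ω).im) μ := iri.integrable_mul hXre hYim
  have pir : Integrable (fun ω => (X ω).im * (Y ω).re) μ := iir.integrable_mul hXim hYre
  have pii : Integrable (fun ω => (X ω).im * (Y ω).im) μ := iii.integrable_mul hXim hYim
  have hXY : Integrable (fun ω => X ω * Y ω) μ := by
    refine Integrable.mono' ((prr.abs.add pii.abs).add (pri.abs.add pir.abs)) ?_ ?_
    · exact hX.1.mul hY.1
    · filter_upwards with ω
      simp only [Pi.add_apply]
      have h1 : ‖X ω * Y ω‖ = ‖X ω‖ * ‖Y ω‖ := norm_mul _ _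
      rw [h1]
      have h2 : ‖X ω‖ * ‖Y ω‖ ≤ (|(X ω).re| + |(X ω).im|) * (|(Y ω).re| + |(Y ω).im|) := by
        gcongr <;> exact Complex.norm_le_abs_re_add_abs_im _
      refine h2.trans (le_of_eq ?_)
      rw [abs_mul, abs_mul, abs_mul, abs_mul]
      ring
  have hreI : (∫ ω, X ω * Y ω ∂μ).re = ∫ ω, (X ω * Y ω).re ∂μ := by
    simpa using (integral_re hXY).symm
  have himI : (∫ ω, X ω * Y ω ∂μ).im = ∫ ω, (X ω * Y ω).im ∂μ := by
    simpa using (integral_im hXY).symm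
  have hreX : (∫ ω, X ω ∂μ).re = ∫ ω, (X ω).re ∂μ := by simpa using (integral_re hX).symm
  have himX : (∫ ω, X ω ∂μ).im = ∫ ω, (X ω).im ∂μ := by simpa using (integral_im hX).symm
  have hreY : (∫ ω, Y ω ∂μ).re = ∫ ω, (Y ω).re ∂μ := by simpa using (integral_re hY).symm
  have himY : (∫ ω, Y ω ∂μ).im = ∫ ω, (Y ω).im ∂μ := by simpa using (integral_im hY).symm
  apply Complex.ext
  · rw [hreI]
    have hre : ∀ ω, (X ω * Y ω).re = (X ω).re * (Y ω).re - (X ω).im * (Y ω).im :=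
      fun ω => Complex.mul_re _ _
    simp_rw [hre]
    rw [integral_sub prr pii, irr.integral_fun_mul_eq_mul_integral hXre.1 hYre.1,
      iii.integral_fun_mul_eq_mul_integral hXim.1 hYim.1, Complex.mul_re,
      hreX, hreY, himX, himY]
  · rw [himI]
    have him : ∀ ω, (X ω * Y ω).im = (X ω).re * (Y ω).im + (X ω).im * (Y ω).re :=
      fun ω => Complex.mul_im _ _
    simp_rw [him]
    rw [integral_add pri pir, iri.integral_fun_mul_eq_mul_integral hXre.1 hYim.1,
      iir.integral_fun_mul_eq_mul_integral hXim.1 hYre.1, Complex.mul_im,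
      hreX, hreY, himX, himY]

/-- If `X0, X1` are independent integrable real random variables and
`E[(X1 - X0) h(X0 + X1)] = 0` for every bounded measurable `h : ℝ → ℂ`, then for every `t`,
`E[X1 e^{itX1}] E[e^{itX0}] = E[X0 e^{itX0}] E[e^{itX1}]`. -/
theorem charFun_derivative_identity {Ω : Type*} [MeasurableSpace Ω]
    (μ : Measure Ω) [IsProbabilityMeasure μ] (X0 X1 : Ω → ℝ)
    (h0 : Measurable X0) (h1 : Measurable X1)
    (hint0 : Integrable X0 μ) (hint1 : Integrable X1 μ)
    (hindep : IndepFun X0 X1 μ)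
    (horth : ∀ h : ℝ → ℂ, Measurable h → (∃ C, ∀ x, ‖h x‖ ≤ C) →
      ∫ ω, ((X1 ω : ℂ) - (X0 ω : ℂ)) * h (X0 ω + X1 ω) ∂μ = 0) :
    ∀ t : ℝ,
      (∫ ω, (X1 ω : ℂ) * Complex.exp ((t * X1 ω : ℝ) * Complex.I) ∂μ) *
          (∫ ω, Complex.exp ((t * X0 ω : ℝ) * Complex.I) ∂μ) =
        (∫ ω, (X0 ω : ℂ) * Complex.exp ((t * X0 ω : ℝ) * Complex.I) ∂μ) *
          (∫ ω, Complex.exp ((t * X1 ω : ℝ) * Complex.I) ∂μ) := by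
  intro t
  set e : ℝ → ℂ := fun x => Complex.exp ((t * x : ℝ) * Complex.I) with he
  have hem : Measurable e := by
    apply Complex.measurable_exp.comp
    exact (Complex.measurable_ofReal.comp (measurable_const.mul measurable_id)).mul
      measurable_const
  have henorm : ∀ x, ‖e x‖ = 1 := fun x => Complex.norm_exp_ofReal_mul_I _
  have hgm : Measurable (fun x : ℝ => (x : ℂ) * e x) :=
    Complex.measurable_ofReal.mul hem
  -- integrabilities
  have inte0 : Integrable (fun ω => e (X0 ω)) μ := by
    refine Integrable.mono' (integrable_const 1) (hem.comp h0).aestronglyMeasurable ?_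
    filter_upwards with ω; rw [henorm]
  have inte1 : Integrable (fun ω => e (X1 ω)) μ := by
    refine Integrable.mono' (integrable_const 1) (hem.comp h1).aestronglyMeasurable ?_
    filter_upwards with ω; rw [henorm]
  have intg0 : Integrable (fun ω => (X0 ω : ℂ) * e (X0 ω)) μ := by
    refine Integrable.mono' hint0.abs (hgm.comp h0).aestronglyMeasurable ?_
    filter_upwards with ω
    rw [norm_mul, henorm, mul_one, Complex.norm_real, Real.norm_eq_abs]
  have intg1 : Integrable (fun ω => (X1 ω : ℂ) * e (X1 ω)) μ := by
    refine Integrable.mono' hint1.abs (hgm.comp h1).aestronglyMeasurable ?_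
    filter_upwards with ω
    rw [norm_mul, henorm, mul_one, Complex.norm_real, Real.norm_eq_abs]
  -- independence of composed variables
  have indA : IndepFun (fun ω => (X1 ω : ℂ) * e (X1 ω)) (fun ω => e (X0 ω)) μ :=
    hindep.symm.comp hgm hem
  have indB : IndepFun (fun ω => (X0 ω : ℂ) * e (X0 ω)) (fun ω => e (X1 ω)) μ :=
    hindep.comp hgm hem
  have intA : Integrable (fun ω => (X1 ω : ℂ) * e (X1 ω) * e (X0 ω)) μ :=
    indA.integrable_mul intg1 inte0
  have intB : Integrable (fun ω => (X0 ω : ℂ) * e (X0 ω) * e (X1 ω)) μ :=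
    indB.integrable_mul intg0 inte1
  have key := horth e hem ⟨1, fun x => (henorm x).le⟩
  have hadd : ∀ ω, e (X0 ω + X1 ω) = e (X0 ω) * e (X1 ω) := by
    intro ω
    simp only [he]
    rw [← Complex.exp_add]
    congr 1
    push_cast
    ring
  have keq : ∀ ω, ((X1 ω : ℂ) - (X0 ω : ℂ)) * e (X0 ω + X1 ω)
      = (X1 ω : ℂ) * e (X1 ω) * e (X0 ω) - (X0 ω : ℂ) * e (X0 ω) * e (X1 ω) := by
    intro ω; rw [hadd]; ring
  rw [show (fun ω => ((X1 ω : ℂ) - (X0 ω : ℂ)) * e (X0 ω + X1 ω))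
      = (fun ω => (X1 ω : ℂ) * e (X1 ω) * e (X0 ω) - (X0 ω : ℂ) * e (X0 ω) * e (X1 ω))
      from funext keq, integral_sub intA intB, sub_eq_zero,
    indep_integral_mul_complex indA intg1 inte0,
    indep_integral_mul_complex indB intg0 inte1] at key
  exact key
end

section
/- Let U, V be independent integrable real random variables with nowhere-vanishing characteristic functions such that E[V - U | U + V] = 0 almost surely. Then for all real t, the logarithmic derivatives of their characteristic functions agree: phi_U'(t)/phi_U(t) = phi_V'(t)/phi_V(t), and consequently phi_U = phi_V. -/
open MeasureTheory ProbabilityTheory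
set_option linter.unusedSectionVars false


section Aux

variable {α : Type*} [MeasurableSpace α]

lemma meas_exp_aux (X : α → ℝ) (hX : Measurable X) (t : ℝ) :
    Measurable (fun ω => Complex.exp ((t * X ω : ℝ) * Complex.I)) :=
  Complex.measurable_exp.comp ((Complex.measurable_ofReal.comp (hX.const_mul t)).mul_const _)

variable {μ : Measure α} [IsProbabilityMeasure μ]

lemma int_exp_aux (X : α → ℝ) (hX : Measurable X) (t : ℝ) :
    Integrable (fun ω => Complex.exp ((t * X ω : ℝ) * Complex.I)) μ := by
  refine (integrable_const (1:ℝ)).mono' (meas_exp_aux X hX t).aestronglyMeasurable ?_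
  refine Filter.Eventually.of_forall fun ω => le_of_eq ?_
  rw [Complex.norm_exp_ofReal_mul_I]

lemma int_mul_exp_aux (X : α → ℝ) (hX : Measurable X) (hXi : Integrable X μ) (t : ℝ) :
    Integrable (fun ω => (X ω : ℂ) * Complex.exp ((t * X ω : ℝ) * Complex.I)) μ := by
  refine hXi.norm.mono'
    ((Complex.measurable_ofReal.comp hX).mul (meas_exp_aux X hX t)).aestronglyMeasurable ?_
  refine Filter.Eventually.of_forall fun ω => le_of_eq ?_
  rw [norm_mul, Complex.norm_real, Complex.norm_exp_ofReal_mul_I, mul_one]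

lemma hasDerivAt_exp_aux (u t : ℝ) :
    HasDerivAt (fun s : ℝ => Complex.exp ((s * u : ℝ) * Complex.I))
      ((u : ℂ) * Complex.exp ((t * u : ℝ) * Complex.I) * Complex.I) t := by
  have base : HasDerivAt (fun s : ℝ => (s : ℂ) * ((u : ℂ) * Complex.I))
      ((u : ℂ) * Complex.I) t := by
    simpa using (Complex.ofRealCLM.hasDerivAt (x := t)).mul_const ((u : ℂ) * Complex.I)
  have h1 : HasDerivAt (fun s : ℝ => ((s * u : ℝ) : ℂ) * Complex.I) ((u : ℂ) * Complex.I) t := by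
    have hfun : (fun s : ℝ => ((s * u : ℝ) : ℂ) * Complex.I)
        = fun s : ℝ => (s : ℂ) * ((u : ℂ) * Complex.I) := by
      funext s; push_cast; ring
    rw [hfun]; exact base
  have h2 := h1.cexp
  have hval : Complex.exp (((t * u : ℝ) : ℂ) * Complex.I) * ((u : ℂ) * Complex.I)
      = (u : ℂ) * Complex.exp ((t * u : ℝ) * Complex.I) * Complex.I := by ring
  rw [← hval]; exact h2

lemma hasDerivAt_cf_aux (X : α → ℝ) (hX : Measurable X) (hXi : Integrable X μ) (t : ℝ) :
    HasDerivAt (fun s : ℝ => ∫ ω, Complex.exp ((s * X ω : ℝ) * Complex.I) ∂μ)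
      (∫ ω, (X ω : ℂ) * Complex.exp ((t * X ω : ℝ) * Complex.I) * Complex.I ∂μ) t := by
  have h := hasDerivAt_integral_of_dominated_loc_of_lip (μ := μ)
    (F := fun s ω => Complex.exp ((s * X ω : ℝ) * Complex.I))
    (F' := fun ω => (X ω : ℂ) * Complex.exp ((t * X ω : ℝ) * Complex.I) * Complex.I)
    (x₀ := t) (bound := fun ω => |X ω|) (s := Metric.ball t 1) (Metric.ball_mem_nhds t one_pos)
    (Filter.Eventually.of_forall fun s => (meas_exp_aux X hX s).aestronglyMeasurable)
    (int_exp_aux X hX t)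
    (((Complex.measurable_ofReal.comp hX).mul (meas_exp_aux X hX t)).mul_const
      _).aestronglyMeasurable
    ?_ hXi.abs ?_
  · exact h.2
  · refine Filter.Eventually.of_forall fun ω => ?_
    refine (convex_ball t 1).lipschitzOnWith_of_nnnorm_hasDerivWithin_le
      (f' := fun s => (X ω : ℂ) * Complex.exp ((s * X ω : ℝ) * Complex.I) * Complex.I)
      (fun s _ => (hasDerivAt_exp_aux (X ω) s).hasDerivWithinAt) (fun s _ => ?_)
    rw [← NNReal.coe_le_coe, coe_nnnorm, Real.coe_nnabs, abs_abs]
    refine le_of_eq ?_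
    rw [norm_mul, norm_mul, Complex.norm_I, mul_one, Complex.norm_real,
      Complex.norm_exp_ofReal_mul_I, mul_one, Real.norm_eq_abs]
  · exact Filter.Eventually.of_forall fun ω => hasDerivAt_exp_aux (X ω) t

lemma indep_integral_mul_aux {U V : α → ℝ} (hU : Measurable U) (hV : Measurable V)
    (hindep : IndepFun U V μ) (f g : ℝ → ℂ) (hf : Measurable f) (hg : Measurable g) :
    ∫ ω, f (U ω) * g (V ω) ∂μ = (∫ ω, f (U ω) ∂μ) * ∫ ω, g (V ω) ∂μ := by
  haveI : IsProbabilityMeasure (μ.map U) := Measure.isProbabilityMeasure_map hU.aemeasurable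
  haveI : IsProbabilityMeasure (μ.map V) := Measure.isProbabilityMeasure_map hV.aemeasurable
  have hmap : μ.map (fun ω => (U ω, V ω)) = (μ.map U).prod (μ.map V) :=
    (ProbabilityTheory.indepFun_iff_map_prod_eq_prod_map_map hU.aemeasurable
      hV.aemeasurable).mp hindep
  have hm2 : Measurable fun p : ℝ × ℝ => f p.1 * g p.2 :=
    (hf.comp measurable_fst).mul (hg.comp measurable_snd)
  have h1 : ∫ ω, f (U ω) * g (V ω) ∂μ
      = ∫ p : ℝ × ℝ, f p.1 * g p.2 ∂(μ.map (fun ω => (U ω, V ω))) := by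
    rw [integral_map (hU.prodMk hV).aemeasurable hm2.aestronglyMeasurable]
  rw [h1, hmap, integral_prod_mul, integral_map hU.aemeasurable hf.aestronglyMeasurable,
    integral_map hV.aemeasurable hg.aestronglyMeasurable]

end Aux

set_option linter.unusedSectionVars false

section Key

variable {Ω : Type*} [MeasurableSpace Ω] {μ : Measure Ω} [IsProbabilityMeasure μ]

lemma integral_complex_ofReal_aux {f : Ω → ℝ} :
    ∫ ω, (f ω : ℂ) ∂μ = ((∫ ω, f ω ∂μ : ℝ) : ℂ) := integral_ofReal

lemma key_int_zero_aux (U V : Ω → ℝ) (hU : Measurable U) (hV : Measurable V)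
    (hUint : Integrable U μ) (hVint : Integrable V μ)
    (hzero : μ[(fun ω => V ω - U ω) |
        MeasurableSpace.comap (fun ω => U ω + V ω) inferInstance] =ᵐ[μ] 0) (t : ℝ) :
    ∫ ω, ((V ω - U ω : ℝ) : ℂ)
      * Complex.exp ((t * (U ω + V ω) : ℝ) * Complex.I) ∂μ = 0 := by
  set W : Ω → ℝ := fun ω => U ω + V ω with hWdef
  have hWm : Measurable W := hU.add hV
  have hm : MeasurableSpace.comap W inferInstance ≤ _ := hWm.comap_le
  haveI : SigmaFinite (μ.trim hm) := by
    have : IsFiniteMeasure (μ.trim hm) := by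
      constructor
      rw [trim_measurableSet_eq hm MeasurableSet.univ]
      exact measure_lt_top μ _
    infer_instance
  have hg : Integrable (fun ω => V ω - U ω) μ := hVint.sub hUint
  have hWmm : Measurable[MeasurableSpace.comap W inferInstance] W :=
    Measurable.of_comap_le le_rfl
  have real0 : ∀ φ : ℝ → ℝ, Measurable φ → (∀ x, |φ x| ≤ 1) →
      ∫ ω, (V ω - U ω) * φ (W ω) ∂μ = 0 := by
    intro φ hφ hφb
    have hk : StronglyMeasurable[MeasurableSpace.comap W inferInstance] (fun ω => φ (W ω)) :=
      (hφ.comp hWmm).stronglyMeasurable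
    have hmul := condExp_stronglyMeasurable_mul_of_bound hm hk hg 1
      (Filter.Eventually.of_forall fun ω => by
        simpa [Real.norm_eq_abs] using hφb (W ω))
    have h2 : (fun ω => φ (W ω))
        * (μ[(fun ω => V ω - U ω)|MeasurableSpace.comap W inferInstance]) =ᵐ[μ] 0 := by
      filter_upwards [hzero] with ω hω
      simp only [Pi.mul_apply, Pi.zero_apply] at hω ⊢
      rw [hω, mul_zero]
    have hcalc : ∫ ω, ((fun ω => φ (W ω)) * fun ω => V ω - U ω) ω ∂μ = 0 := by
      rw [← integral_condExp hm, integral_congr_ae (hmul.trans h2)]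
      simp
    rw [← hcalc]
    exact integral_congr_ae (Filter.Eventually.of_forall fun ω => by simp [mul_comm])
  have hintphi : ∀ φ : ℝ → ℝ, Measurable φ → (∀ x, |φ x| ≤ 1) →
      Integrable (fun ω => (V ω - U ω) * φ (W ω)) μ := by
    intro φ hφ hφb
    refine hg.norm.mono' ((hV.sub hU).mul (hφ.comp hWm)).aestronglyMeasurable ?_
    refine Filter.Eventually.of_forall fun ω => ?_
    simp only [Real.norm_eq_abs, abs_mul, abs_abs]
    exact mul_le_of_le_one_right (abs_nonneg _) (hφb _)
  have hexp : ∀ θ : ℝ, Complex.exp ((θ : ℂ) * Complex.I)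
      = (Real.cos θ : ℂ) + (Real.sin θ : ℂ) * Complex.I := fun θ => by
    rw [Complex.exp_mul_I, Complex.ofReal_cos, Complex.ofReal_sin]
  have hφcos : Measurable fun x : ℝ => Real.cos (t * x) :=
    Real.measurable_cos.comp (measurable_id.const_mul t)
  have hφsin : Measurable fun x : ℝ => Real.sin (t * x) :=
    Real.measurable_sin.comp (measurable_id.const_mul t)
  have hbcos : ∀ x : ℝ, |Real.cos (t * x)| ≤ 1 := fun x => Real.abs_cos_le_one _
  have hbsin : ∀ x : ℝ, |Real.sin (t * x)| ≤ 1 := fun x => Real.abs_sin_le_one _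
  have hc := real0 _ hφcos hbcos
  have hs := real0 _ hφsin hbsin
  have hic := hintphi _ hφcos hbcos
  have his := hintphi _ hφsin hbsin
  calc ∫ ω, ((V ω - U ω : ℝ) : ℂ) * Complex.exp ((t * W ω : ℝ) * Complex.I) ∂μ
      = ∫ ω, ((((V ω - U ω) * Real.cos (t * W ω) : ℝ) : ℂ)
          + (((V ω - U ω) * Real.sin (t * W ω) : ℝ) : ℂ) * Complex.I) ∂μ := by
        refine integral_congr_ae (Filter.Eventually.of_forall fun ω => ?_)
        simp only [hexp (t * W ω)]
        push_cast
        ring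
    _ = ((∫ ω, (V ω - U ω) * Real.cos (t * W ω) ∂μ : ℝ) : ℂ)
          + ((∫ ω, (V ω - U ω) * Real.sin (t * W ω) ∂μ : ℝ) : ℂ) * Complex.I := by
        have hic' : Integrable (fun ω => (((V ω - U ω) * Real.cos (t * W ω) : ℝ) : ℂ)) μ :=
          hic.ofReal
        have his' : Integrable (fun ω => (((V ω - U ω) * Real.sin (t * W ω) : ℝ) : ℂ)) μ :=
          his.ofReal
        rw [integral_add hic' (his'.mul_const Complex.I), integral_mul_const,
          integral_complex_ofReal_aux (μ := μ), integral_complex_ofReal_aux (μ := μ)]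
    _ = 0 := by rw [hc, hs]; simp

end Key
/-- For independent integrable real `U, V` with nowhere-vanishing
characteristic functions and `E[V - U | U + V] = 0` a.s., the logarithmic derivatives
of the characteristic functions agree everywhere, and consequently `φ_U = φ_V`. -/
theorem log_deriv_charFun_eq {Ω : Type*} [MeasurableSpace Ω] (μ : Measure Ω)
    [IsProbabilityMeasure μ] (U V : Ω → ℝ)
    (hU : Measurable U) (hV : Measurable V)
    (hUint : Integrable U μ) (hVint : Integrable V μ)
    (hindep : IndepFun U V μ)
    (hcU : ∀ t : ℝ, (∫ ω, Complex.exp ((t * U ω : ℝ) * Complex.I) ∂μ) ≠ 0)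
    (hcV : ∀ t : ℝ, (∫ ω, Complex.exp ((t * V ω : ℝ) * Complex.I) ∂μ) ≠ 0)
    (hzero : μ[(fun ω => V ω - U ω) |
        MeasurableSpace.comap (fun ω => U ω + V ω) inferInstance] =ᵐ[μ] 0) :
    (∀ t : ℝ,
      deriv (fun s : ℝ => ∫ ω, Complex.exp ((s * U ω : ℝ) * Complex.I) ∂μ) t /
          (∫ ω, Complex.exp ((t * U ω : ℝ) * Complex.I) ∂μ) =
        deriv (fun s : ℝ => ∫ ω, Complex.exp ((s * V ω : ℝ) * Complex.I) ∂μ) t /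
          (∫ ω, Complex.exp ((t * V ω : ℝ) * Complex.I) ∂μ)) ∧
      (fun t : ℝ => ∫ ω, Complex.exp ((t * U ω : ℝ) * Complex.I) ∂μ) =
        (fun t : ℝ => ∫ ω, Complex.exp ((t * V ω : ℝ) * Complex.I) ∂μ) := by
  -- notation
  set φU : ℝ → ℂ := fun t => ∫ ω, Complex.exp ((t * U ω : ℝ) * Complex.I) ∂μ with hφU
  set φV : ℝ → ℂ := fun t => ∫ ω, Complex.exp ((t * V ω : ℝ) * Complex.I) ∂μ with hφV
  have key : ∀ t : ℝ,
      (∫ ω, (V ω : ℂ) * Complex.exp ((t * V ω : ℝ) * Complex.I) ∂μ) * φU t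
        = (∫ ω, (U ω : ℂ) * Complex.exp ((t * U ω : ℝ) * Complex.I) ∂μ)
          * ∫ ω, Complex.exp ((t * V ω : ℝ) * Complex.I) ∂μ := by
    intro t
    have h0 := key_int_zero_aux U V hU hV hUint hVint hzero t
    have hsplit : (fun ω => ((V ω - U ω : ℝ) : ℂ)
          * Complex.exp ((t * (U ω + V ω) : ℝ) * Complex.I))
        = fun ω => ((V ω : ℂ) * Complex.exp ((t * V ω : ℝ) * Complex.I))
              * Complex.exp ((t * U ω : ℝ) * Complex.I)
            - ((U ω : ℂ) * Complex.exp ((t * U ω : ℝ) * Complex.I))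
              * Complex.exp ((t * V ω : ℝ) * Complex.I) := by
      funext ω
      have hadd : ((t * (U ω + V ω) : ℝ) : ℂ) * Complex.I
          = ((t * U ω : ℝ) : ℂ) * Complex.I + ((t * V ω : ℝ) : ℂ) * Complex.I := by
        push_cast; ring
      rw [hadd, Complex.exp_add]
      push_cast; ring
    rw [hsplit] at h0
    have hint1 : Integrable (fun ω => ((V ω : ℂ) * Complex.exp ((t * V ω : ℝ) * Complex.I))
        * Complex.exp ((t * U ω : ℝ) * Complex.I)) μ := by
      refine hVint.norm.mono'
        (((Complex.measurable_ofReal.comp hV).mul (meas_exp_aux V hV t)).mul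
          (meas_exp_aux U hU t)).aestronglyMeasurable ?_
      refine Filter.Eventually.of_forall fun ω => le_of_eq ?_
      rw [norm_mul, norm_mul, Complex.norm_real,
        Complex.norm_exp_ofReal_mul_I, Complex.norm_exp_ofReal_mul_I,
        mul_one, mul_one]
    have hint2 : Integrable (fun ω => ((U ω : ℂ) * Complex.exp ((t * U ω : ℝ) * Complex.I))
        * Complex.exp ((t * V ω : ℝ) * Complex.I)) μ := by
      refine hUint.norm.mono'
        (((Complex.measurable_ofReal.comp hU).mul (meas_exp_aux U hU t)).mul
          (meas_exp_aux V hV t)).aestronglyMeasurable ?_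
      refine Filter.Eventually.of_forall fun ω => le_of_eq ?_
      rw [norm_mul, norm_mul, Complex.norm_real,
        Complex.norm_exp_ofReal_mul_I, Complex.norm_exp_ofReal_mul_I,
        mul_one, mul_one]
    rw [integral_sub hint1 hint2, sub_eq_zero] at h0
    have hfV : Measurable fun v : ℝ => (v : ℂ) * Complex.exp ((t * v : ℝ) * Complex.I) :=
      Complex.measurable_ofReal.mul (meas_exp_aux (fun x : ℝ => x) measurable_id t)
    have hfU : Measurable fun u : ℝ => (u : ℂ) * Complex.exp ((t * u : ℝ) * Complex.I) :=
      hfV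
    have hgU : Measurable fun u : ℝ => Complex.exp ((t * u : ℝ) * Complex.I) :=
      meas_exp_aux (fun x : ℝ => x) measurable_id t
    have e1 : ∫ ω, ((V ω : ℂ) * Complex.exp ((t * V ω : ℝ) * Complex.I))
          * Complex.exp ((t * U ω : ℝ) * Complex.I) ∂μ
        = (∫ ω, (V ω : ℂ) * Complex.exp ((t * V ω : ℝ) * Complex.I) ∂μ)
          * ∫ ω, Complex.exp ((t * U ω : ℝ) * Complex.I) ∂μ := by
      simpa using indep_integral_mul_aux hV hU hindep.symm
        (fun v : ℝ => (v : ℂ) * Complex.exp ((t * v : ℝ) * Complex.I))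
        (fun u : ℝ => Complex.exp ((t * u : ℝ) * Complex.I)) hfV hgU
    have e2 : ∫ ω, ((U ω : ℂ) * Complex.exp ((t * U ω : ℝ) * Complex.I))
          * Complex.exp ((t * V ω : ℝ) * Complex.I) ∂μ
        = (∫ ω, (U ω : ℂ) * Complex.exp ((t * U ω : ℝ) * Complex.I) ∂μ)
          * ∫ ω, Complex.exp ((t * V ω : ℝ) * Complex.I) ∂μ := by
      simpa using indep_integral_mul_aux hU hV hindep
        (fun u : ℝ => (u : ℂ) * Complex.exp ((t * u : ℝ) * Complex.I))
        (fun v : ℝ => Complex.exp ((t * v : ℝ) * Complex.I)) hfU hgU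
    rw [e1, e2] at h0
    simp only [hφU, hφV]
    exact h0
  have hdU : ∀ t : ℝ, HasDerivAt φU
      (∫ ω, (U ω : ℂ) * Complex.exp ((t * U ω : ℝ) * Complex.I) * Complex.I ∂μ) t :=
    fun t => hasDerivAt_cf_aux U hU hUint t
  have hdV : ∀ t : ℝ, HasDerivAt φV
      (∫ ω, (V ω : ℂ) * Complex.exp ((t * V ω : ℝ) * Complex.I) * Complex.I ∂μ) t :=
    fun t => hasDerivAt_cf_aux V hV hVint t
  constructor
  · intro t
    rw [(hdU t).deriv, (hdV t).deriv, div_eq_div_iff (hcU t) (hcV t),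
      integral_mul_const, integral_mul_const]
    have := key t
    linear_combination -Complex.I * this
  · have hdiff : ∀ t : ℝ, HasDerivAt (fun s => φU s / φV s) 0 t := by
      intro t
      have hd := (hdU t).div (hdV t) (hcV t)
      refine hd.congr_deriv (Eq.symm ?_)
      rw [integral_mul_const, integral_mul_const]
      have := key t
      rw [eq_comm, div_eq_zero_iff]
      left
      linear_combination -Complex.I * this
    have hone : ∀ t : ℝ, φU t / φV t = 1 := by
      intro t
      have hconst := is_const_of_deriv_eq_zero (𝕜 := ℝ)
        (fun s => (hdiff s).differentiableAt) (fun s => (hdiff s).deriv) t 0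
      have hU0 : φU 0 = 1 := by
        rw [hφU]; simp
      have hV0 : φV 0 = 1 := by
        rw [hφV]; simp
      rw [hconst, hU0, hV0, div_one]
    funext t
    exact (div_eq_one_iff_eq (hcV t)).mp (hone t)
end
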